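/- For a controllable system (D,H), the minimum positive integer K such that every initial state can be steered to every final state using exactly K (unconstrained) input vectors satisfies N / rank(H) ≤ K ≤ min{q, N − rank(H) + 1} ≤ N, where q is the degree of the minimal polynomial of D. -/

import Mathlib

open Matrix

/-- `h` is `s`-sparse: at most `s` nonzero entries. -/
def IsSparse {L : ℕ} (s : ℕ) (h : Fin L → ℝ) : Prop :=
  {i : Fin L | h i ≠ 0}.ncard ≤ s

/-- Inputs `h 0, …, h (K-1)` steer the state `xinit` to `xfinal`:
`xfinal − D^K xinit = ∑_{k=1}^{K} D^{K−k} H h_k`. -/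
def Steers {N L : ℕ} (D : Matrix (Fin N) (Fin N) ℝ) (H : Matrix (Fin N) (Fin L) ℝ)
    (K : ℕ) (h : Fin K → Fin L → ℝ) (xinit xfinal : Fin N → ℝ) : Prop :=
  xfinal - (D ^ K) *ᵥ xinit = ∑ k : Fin K, (D ^ (K - 1 - (k : ℕ))) *ᵥ (H *ᵥ h k)

/-- The system `(D, H)` is `s`-sparse-controllable. -/
def SparseControllable (N L s : ℕ) (D : Matrix (Fin N) (Fin N) ℝ)
    (H : Matrix (Fin N) (Fin L) ℝ) : Prop :=
  ∀ xinit xfinal : Fin N → ℝ, ∃ K : ℕ, 0 < K ∧ ∃ h : Fin K → Fin L → ℝ,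
    (∀ k, IsSparse s (h k)) ∧ Steers D H K h xinit xfinal

/-- Controllability with unconstrained inputs (arbitrary finite column index type). -/
def Controllable (N : ℕ) {ι : Type*} [Fintype ι] (D : Matrix (Fin N) (Fin N) ℝ)
    (H : Matrix (Fin N) ι ℝ) : Prop :=
  ∀ xinit xfinal : Fin N → ℝ, ∃ K : ℕ, 0 < K ∧ ∃ h : Fin K → ι → ℝ,
    xfinal - (D ^ K) *ᵥ xinit = ∑ k : Fin K, (D ^ (K - 1 - (k : ℕ))) *ᵥ (H *ᵥ h k)

/-- Every initial state can be steered to every final state using exactly `K`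
(unconstrained) input vectors. -/
def UnivSteers (N L : ℕ) (D : Matrix (Fin N) (Fin N) ℝ) (H : Matrix (Fin N) (Fin L) ℝ)
    (K : ℕ) : Prop :=
  ∀ xinit xfinal : Fin N → ℝ, ∃ h : Fin K → Fin L → ℝ, Steers D H K h xinit xfinal

namespace MinInputsAux

open Module

variable {N L : ℕ} (D : Matrix (Fin N) (Fin N) ℝ) (H : Matrix (Fin N) (Fin L) ℝ)

/-- Reachable subspace in `K` steps. -/
noncomputable def Rspace (K : ℕ) : Submodule ℝ (Fin N → ℝ) :=
  ⨆ j : Fin K, LinearMap.range ((D ^ (j : ℕ) * H).mulVecLin)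

lemma Rspace_mono : Monotone (Rspace D H) := fun a b hab =>
  iSup_le fun j => le_iSup_of_le (Fin.castLE hab j) (by simp)

lemma Rspace_zero : Rspace D H 0 = ⊥ := by
  simp [Rspace]

lemma Rspace_succ (K : ℕ) :
    Rspace D H (K + 1) = Rspace D H K ⊔ LinearMap.range ((D ^ K * H).mulVecLin) := by
  apply le_antisymm
  · apply iSup_le
    intro j
    rcases lt_or_eq_of_le (Nat.lt_succ_iff.mp j.isLt) with h | h
    · exact le_sup_of_le_left (le_iSup_of_le (⟨j, h⟩ : Fin K) le_rfl)
    · exact le_sup_of_le_right (le_of_eq (by rw [h]))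
  · apply sup_le
    · exact Rspace_mono D H (Nat.le_succ K)
    · exact le_iSup_of_le (⟨K, Nat.lt_succ_self K⟩ : Fin (K + 1)) le_rfl

lemma Rspace_one : Rspace D H 1 = LinearMap.range H.mulVecLin := by
  rw [Rspace_succ, Rspace_zero, bot_sup_eq, pow_zero, Matrix.one_mul]

lemma Rspace_add_one (K : ℕ) :
    Rspace D H (K + 1) =
      LinearMap.range H.mulVecLin ⊔ Submodule.map D.mulVecLin (Rspace D H K) := by
  have hmap : ∀ j : ℕ, Submodule.map D.mulVecLin (LinearMap.range ((D ^ j * H).mulVecLin))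
      = LinearMap.range ((D ^ (j + 1) * H).mulVecLin) := by
    intro j
    rw [← LinearMap.range_comp, ← Matrix.mulVecLin_mul, pow_succ', Matrix.mul_assoc]
  apply le_antisymm
  · apply iSup_le
    rintro ⟨jv, hj⟩
    cases jv with
    | zero =>
      refine le_sup_of_le_left (le_of_eq ?_)
      have hv : ((⟨0, hj⟩ : Fin (K + 1)) : ℕ) = 0 := rfl
      rw [hv, pow_zero, Matrix.one_mul]
    | succ i =>
      refine le_sup_of_le_right ?_
      have hi : i < K := by omega
      have hv : ((⟨i + 1, hj⟩ : Fin (K + 1)) : ℕ) = i + 1 := rfl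
      rw [hv, ← hmap i]
      exact Submodule.map_mono (le_iSup_of_le (⟨i, hi⟩ : Fin K) le_rfl)
  · apply sup_le
    · refine le_iSup_of_le (⟨0, Nat.succ_pos K⟩ : Fin (K + 1)) (le_of_eq ?_)
      norm_num
    · rw [Rspace, Submodule.map_iSup]
      apply iSup_le
      intro i
      rw [hmap i]
      exact le_iSup_of_le (i.succ) (le_of_eq (by rw [Fin.val_succ]))

lemma Rspace_stab (K : ℕ) (h : Rspace D H (K + 1) = Rspace D H K) (m : ℕ) :
    Rspace D H (K + m) = Rspace D H K := by
  induction m with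
  | zero => rfl
  | succ m ih =>
    have h1 : K + (m + 1) = (K + m) + 1 := rfl
    rw [h1, Rspace_add_one, ih, ← Rspace_add_one, h]

lemma steers_iff (K : ℕ) (y : Fin N → ℝ) :
    (∃ h : Fin K → Fin L → ℝ, y = ∑ k : Fin K, (D ^ (K - 1 - (k : ℕ))) *ᵥ (H *ᵥ h k)) ↔
      y ∈ Rspace D H K := by
  constructor
  · rintro ⟨h, rfl⟩
    apply Submodule.sum_mem
    intro k _
    refine Submodule.mem_iSup_of_mem (⟨K - 1 - (k : ℕ), by
      have := k.isLt; omega⟩ : Fin K) ?_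
    exact ⟨h k, by rw [Matrix.mulVecLin_apply, ← Matrix.mulVec_mulVec]⟩
  · intro hy
    obtain ⟨f, hf, hsum⟩ := (Submodule.mem_iSup_iff_exists_finsupp _ y).mp hy
    choose g hg using fun j => hf j
    refine ⟨fun k => g (Fin.rev k), ?_⟩
    have h1 : ∀ k : Fin K, (D ^ (K - 1 - (k : ℕ))) *ᵥ (H *ᵥ g (Fin.rev k)) = f (Fin.rev k) := by
      intro k
      have hv : ((Fin.rev k : Fin K) : ℕ) = K - 1 - (k : ℕ) := by
        rw [Fin.val_rev]; have := k.isLt; omega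
      rw [← hg (Fin.rev k), Matrix.mulVecLin_apply, ← Matrix.mulVec_mulVec, hv]
    calc y = f.sum fun _ m => m := hsum.symm
      _ = ∑ j : Fin K, f j := Finsupp.sum_fintype _ _ (fun _ => rfl)
      _ = ∑ k : Fin K, f (Fin.rev k) :=
          (Fintype.sum_bijective Fin.rev Fin.rev_bijective _ _ (fun _ => rfl)).symm
      _ = ∑ k : Fin K, (D ^ (K - 1 - (k : ℕ))) *ᵥ (H *ᵥ g (Fin.rev k)) :=
          Finset.sum_congr rfl (fun k _ => (h1 k).symm)

lemma univSteers_iff (K : ℕ) : UnivSteers N L D H K ↔ Rspace D H K = ⊤ := by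
  constructor
  · intro h
    rw [eq_top_iff]
    intro y _
    obtain ⟨hh, hs⟩ := h 0 y
    refine (steers_iff D H K y).mp ⟨hh, ?_⟩
    simpa [Steers, Matrix.mulVec_zero] using hs
  · intro h xinit xfinal
    have hm : xfinal - (D ^ K) *ᵥ xinit ∈ Rspace D H K := h ▸ Submodule.mem_top
    obtain ⟨hh, hy⟩ := (steers_iff D H K _).mpr hm
    exact ⟨hh, hy⟩

lemma top_of_stab (hc : ∀ y : Fin N → ℝ, ∃ K', y ∈ Rspace D H K') (K : ℕ)
    (h : Rspace D H (K + 1) = Rspace D H K) : Rspace D H K = ⊤ := by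
  rw [eq_top_iff]
  intro y _
  obtain ⟨K', hy⟩ := hc y
  have hle : Rspace D H K' ≤ Rspace D H (K + K') :=
    Rspace_mono D H (Nat.le_add_left _ _)
  rw [Rspace_stab D H K h K'] at hle
  exact hle hy

lemma rank_bound (K : ℕ) : finrank ℝ (Rspace D H K) ≤ K * H.rank := by
  induction K with
  | zero => simp [Rspace_zero]
  | succ K ih =>
    rw [Rspace_succ]
    have h1 : finrank ℝ ↥(Rspace D H K ⊔ LinearMap.range ((D ^ K * H).mulVecLin)) ≤
        finrank ℝ (Rspace D H K) + finrank ℝ (LinearMap.range ((D ^ K * H).mulVecLin)) := by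
      have := Submodule.finrank_sup_add_finrank_inf_eq (Rspace D H K)
        (LinearMap.range ((D ^ K * H).mulVecLin))
      omega
    have h2 : finrank ℝ (LinearMap.range ((D ^ K * H).mulVecLin)) ≤ H.rank :=
      Matrix.rank_mul_le_right _ _
    calc finrank ℝ ↥(Rspace D H K ⊔ LinearMap.range ((D ^ K * H).mulVecLin))
        ≤ K * H.rank + H.rank := le_trans h1 (Nat.add_le_add ih h2)
      _ = (K + 1) * H.rank := by ring

lemma growth (hc : ∀ y : Fin N → ℝ, ∃ K', y ∈ Rspace D H K') (K : ℕ) :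
    Rspace D H (K + 1) = ⊤ ∨ H.rank + K ≤ finrank ℝ (Rspace D H (K + 1)) := by
  induction K with
  | zero =>
    right
    rw [Rspace_one]
    simp [Matrix.rank]
  | succ K ih =>
    rcases ih with h | h
    · left
      rw [eq_top_iff, ← h]
      exact Rspace_mono D H (by omega)
    · by_cases heq : Rspace D H (K + 1 + 1) = Rspace D H (K + 1)
      · left
        rw [heq]
        exact top_of_stab D H hc (K + 1) heq
      · right
        have hlt : Rspace D H (K + 1) < Rspace D H (K + 1 + 1) :=
          lt_of_le_of_ne (Rspace_mono D H (by omega)) (fun h' => heq h'.symm)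
        have := Submodule.finrank_lt_finrank_of_lt hlt
        omega

end MinInputsAux

/-- For a controllable system, the minimum number `K` of unconstrained input vectors
needed to steer any state to any other satisfies
`N / rank H ≤ K ≤ min{q, N − rank H + 1} ≤ N`, where `q = deg(minpoly D)`. -/
theorem min_inputs_unconstrained (N L : ℕ) (hN : 0 < N) (hL : 0 < L)
    (D : Matrix (Fin N) (Fin N) ℝ) (H : Matrix (Fin N) (Fin L) ℝ)
    (hctrl : Controllable N D H)
    (q : ℕ) (hq : q = (minpoly ℝ D).natDegree) :
    ∃ K : ℕ, IsLeast {K' : ℕ | 0 < K' ∧ UnivSteers N L D H K'} K ∧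
      N / H.rank ≤ K ∧ K ≤ min q (N - H.rank + 1) ∧ min q (N - H.rank + 1) ≤ N := by
  classical
  open MinInputsAux Module in
  have hc : ∀ y : Fin N → ℝ, ∃ K', y ∈ Rspace D H K' := by
    intro y
    obtain ⟨K, -, h, heq⟩ := hctrl 0 y
    exact ⟨K, (steers_iff D H K y).mp ⟨h, by simpa [Matrix.mulVec_zero] using heq⟩⟩
  have hNfin : finrank ℝ (Fin N → ℝ) = N := by simp
  haveI : Nontrivial (Matrix (Fin N) (Fin N) ℝ) := by
    haveI : Nonempty (Fin N) := ⟨⟨0, hN⟩⟩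
    infer_instance
  have hint : IsIntegral ℝ D := Matrix.isIntegral D
  have hq0 : 0 < q := hq ▸ minpoly.natDegree_pos hint
  have hqN : q ≤ N := by
    have hdvd := D.minpoly_dvd_charpoly
    have hne : D.charpoly ≠ 0 := D.charpoly_monic.ne_zero
    have := Polynomial.natDegree_le_of_dvd hdvd hne
    rw [D.charpoly_natDegree_eq_dim, Fintype.card_fin] at this
    omega
  -- Cayley–Hamilton style bound: R q = ⊤
  have hDq : D ^ q = ∑ i ∈ Finset.range q, (-(minpoly ℝ D).coeff i) • D ^ i := by
    have h0 := minpoly.aeval ℝ D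
    rw [Polynomial.aeval_eq_sum_range, ← hq, Finset.sum_range_succ,
      hq, (minpoly.monic hint).coeff_natDegree, one_smul, ← hq] at h0
    have : ∑ i ∈ Finset.range q, (minpoly ℝ D).coeff i • D ^ i + D ^ q = 0 := h0
    have h2 : D ^ q = -∑ i ∈ Finset.range q, (minpoly ℝ D).coeff i • D ^ i := by
      exact eq_neg_iff_add_eq_zero.mpr ((add_comm _ _).trans this)
    rw [h2, ← Finset.sum_neg_distrib]
    exact Finset.sum_congr rfl (fun i _ => (neg_smul _ _).symm)
  have hRq : Rspace D H q = ⊤ := by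
    apply top_of_stab D H hc
    rw [Rspace_succ]
    refine sup_eq_left.mpr ?_
    rintro y ⟨v, rfl⟩
    have hsum : ∀ w : Fin N → ℝ,
        (∑ i ∈ Finset.range q, (-(minpoly ℝ D).coeff i) • D ^ i) *ᵥ w
          = ∑ i ∈ Finset.range q, ((-(minpoly ℝ D).coeff i) • D ^ i) *ᵥ w := by
      intro w
      exact map_sum (AddMonoidHom.mk' (fun M : Matrix (Fin N) (Fin N) ℝ => M *ᵥ w)
        (fun a b => Matrix.add_mulVec a b w)) _ _
    rw [Matrix.mulVecLin_apply, ← Matrix.mulVec_mulVec, hDq, hsum]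
    apply Submodule.sum_mem
    intro i hi
    rw [Matrix.smul_mulVec]
    refine Submodule.smul_mem _ _ ?_
    refine Submodule.mem_iSup_of_mem (⟨i, Finset.mem_range.mp hi⟩ : Fin q) ?_
    exact ⟨v, by rw [Matrix.mulVecLin_apply, ← Matrix.mulVec_mulVec]⟩
  -- rank growth bound: R (N - rank H + 1) = ⊤
  have hrN : H.rank ≤ N := by
    have := H.rank_le_card_height
    simpa using this
  have hR2 : Rspace D H (N - H.rank + 1) = ⊤ := by
    rcases growth D H hc (N - H.rank) with h | h
    · exact h
    · apply Submodule.eq_top_of_finrank_eq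
      rw [hNfin]
      have hle : finrank ℝ (Rspace D H (N - H.rank + 1)) ≤ N := by
        have := Submodule.finrank_le (Rspace D H (N - H.rank + 1))
        omega
      omega
  set K0 := min q (N - H.rank + 1) with hK0def
  have hK0 : 0 < K0 ∧ UnivSteers N L D H K0 := by
    constructor
    · exact lt_min hq0 (Nat.succ_pos _)
    · rw [univSteers_iff]
      rcases min_choice q (N - H.rank + 1) with h | h
      · rw [hK0def, h, hRq]
      · rw [hK0def, h, hR2]
  have hne : ∃ K, 0 < K ∧ UnivSteers N L D H K := ⟨K0, hK0⟩
  refine ⟨Nat.find hne, ⟨Nat.find_spec hne, fun m hm => Nat.find_min' hne hm⟩, ?_,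
    Nat.find_min' hne hK0, le_trans (min_le_left _ _) hqN⟩
  obtain ⟨-, hu⟩ := Nat.find_spec hne
  have htop := (univSteers_iff D H _).mp hu
  have hfr : finrank ℝ (Rspace D H (Nat.find hne)) = N := by
    rw [htop, finrank_top, hNfin]
  have hNle : N ≤ Nat.find hne * H.rank := by
    have := rank_bound D H (Nat.find hne)
    omega
  rcases Nat.eq_zero_or_pos H.rank with h0 | hrpos
  · simp [h0]
  · calc N / H.rank ≤ (Nat.find hne * H.rank) / H.rank := Nat.div_le_div_right hNle
      _ = Nat.find hne := Nat.mul_div_cancel _ hrpos
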